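/- arXiv:1104.1874 — 3 statements merged into one kernel-verified Lean document; each statement's English description precedes it below -/
import Mathlib

section
/- Let f be holomorphic on a neighborhood of the closed disc of radius R centered at 0 in ℂ, with f(0) = 0. Then for all 0 < r < R, the maximum of |f'(z)| over |z| ≤ r is at most (8R/(R−r)²) times the maximum of |Re f(z)| over |z| ≤ R. -/
theorem borel_caratheodory_deriv (f : ℂ → ℂ) (R r : ℝ) (hr : 0 < r) (hrR : r < R)
    (U : Set ℂ) (hU : IsOpen U) (hsub : Metric.closedBall (0 : ℂ) R ⊆ U)
    (hf : DifferentiableOn ℂ f U) (hf0 : f 0 = 0) (z : ℂ) (hz : ‖z‖ ≤ r) :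
    ‖deriv f z‖ ≤ (8 * R / (R - r) ^ 2) *
      ⨆ w : Metric.closedBall (0 : ℂ) R, |(f w).re| := by
  have hR : 0 < R := hr.trans hrR
  set M : ℝ := ⨆ w : Metric.closedBall (0 : ℂ) R, |(f w).re| with hMdef
  have hcont : ContinuousOn (fun w => |(f w).re|) (Metric.closedBall (0:ℂ) R) :=
    (continuous_abs.comp Complex.continuous_re).comp_continuousOn
      (hf.continuousOn.mono hsub)
  have hbdd : BddAbove (Set.range fun w : Metric.closedBall (0:ℂ) R => |(f w).re|) := by
    obtain ⟨b, hb⟩ := ((isCompact_closedBall (0:ℂ) R).image_of_continuousOn hcont).bddAbove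
    refine ⟨b, ?_⟩
    rintro _ ⟨w, rfl⟩
    exact hb ⟨w, w.2, rfl⟩
  have hMle : ∀ w ∈ Metric.closedBall (0:ℂ) R, |(f w).re| ≤ M := fun w hw =>
    le_ciSup hbdd ⟨w, hw⟩
  have hM0 : 0 ≤ M := (abs_nonneg _).trans
    (hMle 0 (by simpa using hR.le))
  have hC : 0 < 8 * R / (R - r) ^ 2 :=
    div_pos (by linarith) (pow_pos (by linarith) 2)
  have key : ∀ M₀ : ℝ, M < M₀ → ‖deriv f z‖ ≤ 8 * R / (R - r) ^ 2 * M₀ := by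
    intro M₀ hM₀
    have hM₀pos : 0 < M₀ := lt_of_le_of_lt hM0 hM₀
    set ρ : ℝ := (R + r) / 2 with hρdef
    have hρR : ρ < R := by rw [hρdef]; linarith
    have hρpos : 0 < ρ := by rw [hρdef]; linarith
    have hre : ∀ w ∈ Metric.closedBall (0:ℂ) R, (f w).re < M₀ := fun w hw =>
      lt_of_le_of_lt ((le_abs_self _).trans (hMle w hw)) hM₀
    have hden : ∀ w ∈ Metric.closedBall (0:ℂ) R, (2 * (M₀:ℂ)) - f w ≠ 0 := by
      intro w hw h
      have h1 := hre w hw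
      have h2 : f w = 2 * (M₀:ℂ) := by linear_combination -h
      rw [h2] at h1
      simp at h1
      linarith
    set g : ℂ → ℂ := fun w => f w / (2 * (M₀:ℂ) - f w) with hgdef
    have hg0 : g 0 = 0 := by simp [hgdef, hf0]
    have hballU : Metric.ball (0:ℂ) R ⊆ U := Metric.ball_subset_closedBall.trans hsub
    have hgdiff : DifferentiableOn ℂ g (Metric.ball (0:ℂ) R) := by
      apply DifferentiableOn.div
      · exact hf.mono hballU
      · exact (differentiableOn_const _).sub (hf.mono hballU)
      · exact fun w hw => hden w (Metric.ball_subset_closedBall hw)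
    have hnormlt : ∀ w ∈ Metric.closedBall (0:ℂ) R, ‖f w‖ < ‖2 * (M₀:ℂ) - f w‖ := by
      intro w hw
      have h1 := hre w hw
      have hsq : ‖f w‖ ^ 2 < ‖2 * (M₀:ℂ) - f w‖ ^ 2 := by
        rw [Complex.sq_norm, Complex.sq_norm,
          Complex.normSq_apply, Complex.normSq_apply]
        simp only [Complex.sub_re, Complex.sub_im, Complex.mul_re, Complex.mul_im,
          Complex.ofReal_re, Complex.ofReal_im, Complex.re_ofNat, Complex.im_ofNat]
        nlinarith [hM₀pos, h1]
      exact lt_of_pow_lt_pow_left₀ 2 (norm_nonneg _) hsq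
    have hmaps : Set.MapsTo g (Metric.ball (0:ℂ) R) (Metric.ball (g 0) 1) := by
      intro w hw
      rw [hg0, Metric.mem_ball, dist_zero_right, hgdef]
      simp only
      rw [norm_div, div_lt_one (norm_pos_iff.mpr (hden w (Metric.ball_subset_closedBall hw)))]
      exact hnormlt w (Metric.ball_subset_closedBall hw)
    have hgw : ∀ w ∈ Metric.ball (0:ℂ) R, ‖g w‖ * R ≤ ‖w‖ := by
      intro w hw
      have := Complex.dist_le_div_mul_dist_of_mapsTo_ball hgdiff (hmaps.mono_right Metric.ball_subset_closedBall) hw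
      rw [hg0, dist_zero_right, dist_zero_right] at this
      calc ‖g w‖ * R ≤ 1 / R * ‖w‖ * R := by
            exact mul_le_mul_of_nonneg_right this hR.le
        _ = ‖w‖ := by field_simp
    have hfB : ∀ w ∈ Metric.closedBall (0:ℂ) ρ, ‖f w‖ ≤ 2 * M₀ * ρ / (R - ρ) := by
      intro w hw
      rw [Metric.mem_closedBall, dist_zero_right] at hw
      have hwR : w ∈ Metric.ball (0:ℂ) R := by
        rw [Metric.mem_ball, dist_zero_right]; exact lt_of_le_of_lt hw hρR
      have hd := hden w (Metric.ball_subset_closedBall hwR)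
      have heq : f w = g w * (2 * (M₀:ℂ) - f w) := by
        rw [hgdef]; field_simp
      have hnf : ‖f w‖ = ‖g w‖ * ‖2 * (M₀:ℂ) - f w‖ := by
        conv_lhs => rw [heq]
        rw [norm_mul]
      have hdb : ‖2 * (M₀:ℂ) - f w‖ ≤ 2 * M₀ + ‖f w‖ := by
        calc ‖2 * (M₀:ℂ) - f w‖ ≤ ‖2 * (M₀:ℂ)‖ + ‖f w‖ := norm_sub_le _ _
          _ = 2 * M₀ + ‖f w‖ := by
              rw [norm_mul]
              simp [Complex.norm_real, abs_of_pos hM₀pos]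
      have hg1 : ‖g w‖ * R ≤ ρ := le_trans (hgw w hwR) hw
      have h3 : ‖f w‖ * R ≤ ρ * (2 * M₀ + ‖f w‖) := by
        calc ‖f w‖ * R = (‖g w‖ * R) * ‖2 * (M₀:ℂ) - f w‖ := by rw [hnf]; ring
          _ ≤ ρ * (2 * M₀ + ‖f w‖) := by
              apply mul_le_mul hg1 hdb (norm_nonneg _) (by linarith)
      rw [le_div_iff₀ (by linarith : (0:ℝ) < R - ρ)]
      nlinarith [norm_nonneg (f w)]
    set d₀ : ℝ := (R - r) / 2 with hd₀def
    have hd₀pos : 0 < d₀ := by rw [hd₀def]; linarith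
    have hsub2 : Metric.closedBall z d₀ ⊆ Metric.closedBall (0:ℂ) ρ := by
      intro w hw
      rw [Metric.mem_closedBall, dist_eq_norm] at hw
      rw [Metric.mem_closedBall, dist_zero_right]
      calc ‖w‖ = ‖(w - z) + z‖ := by ring_nf
        _ ≤ ‖w - z‖ + ‖z‖ := norm_add_le _ _
        _ ≤ d₀ + r := add_le_add hw hz
        _ = ρ := by rw [hd₀def, hρdef]; ring
    have hdcc : DiffContOnCl ℂ f (Metric.ball z d₀) := by
      apply DifferentiableOn.diffContOnCl
      apply hf.mono
      refine (Metric.closure_ball_subset_closedBall.trans ?_)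
      refine hsub2.trans ?_
      refine (Metric.closedBall_subset_closedBall hρR.le).trans hsub
    have hcauchy := Complex.norm_deriv_le_of_forall_mem_sphere_norm_le hd₀pos hdcc
      (fun w hw => hfB w (hsub2 (Metric.sphere_subset_closedBall hw)))
    refine hcauchy.trans ?_
    have hEq : 2 * M₀ * ρ / (R - ρ) / d₀ = 4 * M₀ * (R + r) / (R - r) ^ 2 := by
      rw [hρdef, hd₀def]
      have h1 : R - (R + r) / 2 = (R - r) / 2 := by ring
      rw [h1]
      field_simp
      ring
    have hEq2 : 8 * R / (R - r) ^ 2 * M₀ = 8 * R * M₀ / (R - r) ^ 2 := by ring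
    rw [hEq, hEq2, div_le_div_iff_of_pos_right (pow_pos (by linarith : (0:ℝ) < R - r) 2)]
    nlinarith [hM₀pos]
  refine le_of_forall_gt_imp_ge_of_dense ?_
  intro y hy
  have hM₀gt : M < y / (8 * R / (R - r) ^ 2) := by
    rw [lt_div_iff₀ hC]
    linarith [hy]
  calc ‖deriv f z‖ ≤ 8 * R / (R - r) ^ 2 * (y / (8 * R / (R - r) ^ 2)) :=
        key _ hM₀gt
    _ = y := mul_div_cancel₀ y hC.ne'
end

section
/- Let (λ_n)_{n≥0} be a sequence of complex numbers such that there exist constants C > 0, M ≥ 1 and 0 < ρ < 1 with |λ_n| ≤ C·M·ρⁿ for all n, and |λ_n| ≤ 1 for all n. Then for all ζ ∈ ℂ, the infinite product Z(ζ) = Π_{n≥0}(1 − ζλ_n) converges and satisfies log|Z(ζ)| ≤ C₁·log(M)·log(1+|ζ|) + C₂·|ζ| for constants C₁, C₂ depending only on C and ρ (not on M), provided M is large enough. -/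
open Filter Finset Topology
set_option maxHeartbeats 1000000

lemma hasProd_zero_of_exists_eq_zero' {f : ℕ → ℂ} (h : ∃ i, f i = 0) : HasProd f 0 := by
  obtain ⟨i₀, h0⟩ := h
  have hev : ∀ᶠ s : Finset ℕ in atTop, ∏ i ∈ s, f i = (0 : ℂ) := by
    filter_upwards [Filter.eventually_ge_atTop ({i₀} : Finset ℕ)] with s hs
    exact Finset.prod_eq_zero (hs (Finset.mem_singleton_self i₀)) h0
  exact (tendsto_congr' hev).mpr tendsto_const_nhds

theorem determinant_growth_bound (C ρ : ℝ) (hC : 0 < C) (hρ0 : 0 < ρ) (hρ1 : ρ < 1) :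
    ∃ C₁ C₂ M₀ : ℝ, 0 < C₁ ∧ 0 < C₂ ∧ 1 ≤ M₀ ∧
      ∀ M : ℝ, M₀ ≤ M → ∀ lam : ℕ → ℂ,
        (∀ n, ‖lam n‖ ≤ C * M * ρ ^ n) → (∀ n, ‖lam n‖ ≤ 1) →
        ∀ ζ : ℂ, Multipliable (fun n => 1 - ζ * lam n) ∧
          Real.log ‖∏' n : ℕ, (1 - ζ * lam n)‖ ≤
            C₁ * Real.log M * Real.log (1 + ‖ζ‖) + C₂ * ‖ζ‖ := by
  have hLρ : Real.log ρ < 0 := Real.log_neg hρ0 hρ1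
  set L : ℝ := -Real.log ρ with hLdef
  have hL0 : 0 < L := by simp only [hLdef]; linarith
  have h1ρ : 0 < 1 - ρ := by linarith
  refine ⟨1/L + 1, C/(1-ρ), Real.exp 1, by positivity, by positivity,
    Real.one_le_exp (by norm_num), ?_⟩
  intro M hM lam hbound hone ζ
  have hM1 : 1 ≤ M := (Real.one_le_exp (by norm_num)).trans hM
  have hM0 : 0 < M := lt_of_lt_of_le one_pos hM1
  have hlogM : 1 ≤ Real.log M := by
    rw [show (1:ℝ) = Real.log (Real.exp 1) from (Real.log_exp 1).symm]
    exact Real.log_le_log (Real.exp_pos 1) hM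
  set r : ℝ := ‖ζ‖ with hrdef
  have hr0 : 0 ≤ r := norm_nonneg ζ
  set f : ℕ → ℂ := fun n => 1 - ζ * lam n with hfdef
  have hgeo : Summable (fun n : ℕ => (r * (C*M)) * ρ ^ n) :=
    (summable_geometric_of_lt_one hρ0.le hρ1).mul_left _
  have hxle : ∀ n, r * ‖lam n‖ ≤ (r*(C*M)) * ρ ^ n := by
    intro n
    calc r * ‖lam n‖ ≤ r * (C*M*ρ^n) := mul_le_mul_of_nonneg_left (hbound n) hr0
      _ = (r*(C*M))*ρ^n := by ring
  -- multipliability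
  have hmult : Multipliable f := by
    by_cases hz : ∃ i, f i = 0
    · exact ⟨0, hasProd_zero_of_exists_eq_zero' hz⟩
    · push_neg at hz
      refine Complex.multipliable_of_summable_log (f := f) ?_
      have htend : Tendsto (fun n : ℕ => (r*(C*M)) * ρ ^ n) atTop (𝓝 ((r*(C*M)) * 0)) :=
        (tendsto_pow_atTop_nhds_zero_of_lt_one hρ0.le hρ1).const_mul _
      rw [mul_zero] at htend
      obtain ⟨N₀, hN₀⟩ := Filter.eventually_atTop.mp
        (htend.eventually_lt_const (by norm_num : (0:ℝ) < 1/2))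
      rw [← summable_nat_add_iff N₀]
      refine Summable.of_norm_bounded (g := fun n => (3/2) * ((r*(C*M)) * ρ ^ (n+N₀)))
        ((summable_nat_add_iff N₀).mpr (hgeo.mul_left (3/2))) ?_
      intro n
      have h12 : ‖-(ζ * lam (n+N₀))‖ ≤ 1/2 := by
        rw [norm_neg, norm_mul]
        exact ((hxle (n+N₀)).trans_lt (hN₀ (n+N₀) (Nat.le_add_left _ _))).le
      have heq : f (n+N₀) = 1 + -(ζ * lam (n+N₀)) := by
        simp only [hfdef, sub_eq_add_neg]
      calc ‖Complex.log (f (n+N₀))‖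
          = ‖Complex.log (1 + -(ζ * lam (n+N₀)))‖ := by rw [heq]
        _ ≤ 3/2 * ‖-(ζ * lam (n+N₀))‖ := Complex.norm_log_one_add_half_le_self h12
        _ ≤ 3/2 * ((r*(C*M)) * ρ ^ (n+N₀)) := by
            rw [norm_neg, norm_mul]
            exact mul_le_mul_of_nonneg_left (hxle (n+N₀)) (by norm_num)
  refine ⟨hmult, ?_⟩
  -- the log sum
  set a : ℕ → ℝ := fun n => Real.log (1 + r * ‖lam n‖) with hadef
  have hpos : ∀ n, (0:ℝ) < 1 + r * ‖lam n‖ := by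
    intro n; have := mul_nonneg hr0 (norm_nonneg (lam n)); linarith
  have ha_nonneg : ∀ n, 0 ≤ a n := by
    intro n; exact Real.log_nonneg (by linarith [mul_nonneg hr0 (norm_nonneg (lam n))])
  have haleq : ∀ n, a n ≤ (r*(C*M)) * ρ ^ n := by
    intro n
    have h1 : a n ≤ r * ‖lam n‖ := by
      have := Real.log_le_sub_one_of_pos (hpos n)
      simp only [hadef] at *
      linarith
    exact h1.trans (hxle n)
  have hsa : Summable a := Summable.of_nonneg_of_le ha_nonneg haleq hgeo
  set S : ℝ := ∑' n, a n with hSdef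
  have hexp : ∀ n, ‖f n‖ ≤ Real.exp (a n) := by
    intro n
    rw [hadef, Real.exp_log (hpos n)]
    calc ‖(1:ℂ) - ζ * lam n‖ ≤ ‖(1:ℂ)‖ + ‖ζ * lam n‖ := norm_sub_le _ _
      _ = 1 + r * ‖lam n‖ := by rw [norm_one, norm_mul]
  have hZ : ‖∏' n, f n‖ ≤ Real.exp S := by
    have hten := hmult.hasProd.tendsto_prod_nat
    refine le_of_tendsto hten.norm (Filter.Eventually.of_forall fun n => ?_)
    calc ‖∏ i ∈ Finset.range n, f i‖ = ∏ i ∈ Finset.range n, ‖f i‖ := norm_prod _ _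
      _ ≤ ∏ i ∈ Finset.range n, Real.exp (a i) :=
          Finset.prod_le_prod (fun i _ => norm_nonneg _) (fun i _ => hexp i)
      _ = Real.exp (∑ i ∈ Finset.range n, a i) := (Real.exp_sum _ _).symm
      _ ≤ Real.exp S := Real.exp_le_exp.mpr (Summable.sum_le_tsum _ (fun i _ => ha_nonneg i) hsa)
  have hlogZ : Real.log ‖∏' n, f n‖ ≤ S := by
    rcases eq_or_ne ‖∏' n, f n‖ 0 with h | h
    · rw [h, Real.log_zero]; exact tsum_nonneg ha_nonneg
    · have hp : 0 < ‖∏' n, f n‖ := (norm_nonneg _).lt_of_ne' h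
      calc Real.log ‖∏' n, f n‖ ≤ Real.log (Real.exp S) := Real.log_le_log hp hZ
        _ = S := Real.log_exp S
  -- split the sum at N
  set N : ℕ := ⌈Real.log M / L⌉₊ with hNdef
  have hNge : Real.log M / L ≤ (N:ℝ) := Nat.le_ceil _
  have hNle : (N:ℝ) ≤ Real.log M / L + 1 :=
    (Nat.ceil_lt_add_one (div_nonneg (by linarith) hL0.le)).le
  have hlogMN : Real.log M ≤ (N:ℝ) * L := by
    rw [div_le_iff₀ hL0] at hNge; linarith
  have hρpow : ρ ^ N ≤ Real.exp (-(Real.log M)) := by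
    have hp : ρ ^ N = Real.exp ((N:ℝ) * Real.log ρ) := by
      rw [Real.exp_nat_mul, Real.exp_log hρ0]
    rw [hp]
    apply Real.exp_le_exp.mpr
    have : Real.log ρ = -L := by rw [hLdef]; ring
    rw [this]; nlinarith
  have hMρ : M * ρ ^ N ≤ 1 := by
    calc M * ρ ^ N ≤ M * Real.exp (-(Real.log M)) :=
          mul_le_mul_of_nonneg_left hρpow hM0.le
      _ = M * M⁻¹ := by rw [Real.exp_neg, Real.exp_log hM0]
      _ = 1 := mul_inv_cancel₀ hM0.ne'
  have hsplit := Summable.sum_add_tsum_nat_add (f := a) N hsa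
  have hhead : ∑ i ∈ Finset.range N, a i ≤ (N:ℝ) * Real.log (1+r) := by
    calc ∑ i ∈ Finset.range N, a i ≤ ∑ _i ∈ Finset.range N, Real.log (1+r) := by
          refine Finset.sum_le_sum fun i _ => ?_
          exact Real.log_le_log (hpos i)
            (by nlinarith [hone i, hr0, norm_nonneg (lam i)])
      _ = (N:ℝ) * Real.log (1+r) := by
          rw [Finset.sum_const, Finset.card_range, nsmul_eq_mul]
  have htail : ∑' i, a (i + N) ≤ r * C / (1-ρ) := by
    have hs1 : Summable fun i => a (i+N) := (summable_nat_add_iff N).mpr hsa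
    have hs2 : Summable fun i : ℕ => (r*(C*M)) * ρ ^ (i+N) := (summable_nat_add_iff N).mpr hgeo
    have h3 : ∑' i, a (i+N) ≤ ∑' i : ℕ, (r*(C*M)) * ρ ^ (i+N) :=
      Summable.tsum_le_tsum (fun i => haleq (i+N)) hs1 hs2
    have h4 : ∑' i : ℕ, (r*(C*M)) * ρ ^ (i+N) = (r*(C*M)*ρ^N) * (1-ρ)⁻¹ := by
      have he : ∀ i : ℕ, (r*(C*M)) * ρ ^ (i+N) = (r*(C*M)*ρ^N) * ρ^i := by
        intro i; rw [pow_add]; ring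
      rw [tsum_congr he, tsum_mul_left, tsum_geometric_of_lt_one hρ0.le hρ1]
    rw [h4] at h3
    refine h3.trans ?_
    rw [div_eq_mul_inv]
    have h5 : r*(C*M)*ρ^N ≤ r*C := by nlinarith [mul_nonneg hr0 hC.le, pow_nonneg hρ0.le N]
    exact mul_le_mul_of_nonneg_right h5 (by positivity)
  have h6 : (N:ℝ) ≤ (1/L + 1) * Real.log M := by
    have e : (1/L + 1) * Real.log M = Real.log M / L + Real.log M := by
      field_simp
    rw [e]; linarith
  have hlr : 0 ≤ Real.log (1+r) := Real.log_nonneg (by linarith)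
  calc Real.log ‖∏' n, f n‖ ≤ S := hlogZ
    _ = ∑ i ∈ Finset.range N, a i + ∑' i, a (i+N) := hsplit.symm
    _ ≤ (N:ℝ) * Real.log (1+r) + r * C / (1-ρ) := add_le_add hhead htail
    _ ≤ (1/L + 1) * Real.log M * Real.log (1+r) + C/(1-ρ) * r := by
        have h7 := mul_le_mul_of_nonneg_right h6 hlr
        have h8 : r * C / (1-ρ) = C/(1-ρ) * r := by ring
        linarith
end

section
/- Let H be a Hilbert space with orthonormal basis (e_l)_{l∈ℕ} and M : H → H a compact operator. Then for every n ∈ ℕ, the n-th singular value satisfies s_n(M) ≤ Σ_{l≥n} ‖M e_l‖. -/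
open scoped ENNReal

/-- The `n`-th singular value of an operator, via the Courant minimax formula:
the infimum over subspaces `F` of dimension `n` of the supremum of `‖M f‖` over
unit vectors `f` orthogonal to `F`. -/
noncomputable def singularValue {H : Type*} [NormedAddCommGroup H] [InnerProductSpace ℂ H]
    (M : H →L[ℂ] H) (n : ℕ) : ℝ :=
  ⨅ F : {F : Submodule ℂ H // Module.finrank ℂ F = n},
    ⨆ f : {f : H // f ∈ (F : Submodule ℂ H)ᗮ ∧ ‖f‖ ≤ 1}, ‖M (f : H)‖

theorem singularValue_le_tsum_norm {H : Type*} [NormedAddCommGroup H]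
    [InnerProductSpace ℂ H] [CompleteSpace H]
    (b : HilbertBasis ℕ ℂ H) (M : H →L[ℂ] H) (hM : IsCompactOperator M) (n : ℕ) :
    ENNReal.ofReal (singularValue M n) ≤
      ∑' l : ℕ, if n ≤ l then (‖M (b l)‖₊ : ℝ≥0∞) else 0 := by
  set g : ℕ → NNReal := fun l => if n ≤ l then ‖M (b l)‖₊ else 0 with hg
  have hcoe : ∀ l : ℕ, (if n ≤ l then (‖M (b l)‖₊ : ℝ≥0∞) else 0) = (g l : ℝ≥0∞) := by
    intro l; by_cases h : n ≤ l <;> simp [hg, h]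
  rw [tsum_congr hcoe]
  by_cases htop : (∑' l, (g l : ℝ≥0∞)) = ⊤
  · rw [htop]; exact le_top
  have hsum : Summable g := ENNReal.tsum_coe_ne_top_iff_summable.mp htop
  have hgR : Summable fun l => (g l : ℝ) := NNReal.summable_coe.mpr hsum
  rw [← ENNReal.coe_tsum hsum, ← ENNReal.ofReal_coe_nnreal]
  apply ENNReal.ofReal_le_ofReal
  rw [NNReal.coe_tsum]
  -- main real inequality
  have hgval : ∀ l, (g l : ℝ) = if n ≤ l then ‖M (b l)‖ else 0 := by
    intro l; by_cases h : n ≤ l <;> simp [hg, h]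
  set F : Submodule ℂ H := Submodule.span ℂ (Set.range fun i : Fin n => b i) with hFdef
  have hF : Module.finrank ℂ F = n := by
    have := finrank_span_eq_card
      ((b.orthonormal.linearIndependent).comp Fin.val (Fin.val_injective (n := n)))
    simpa [Function.comp_def] using this
  have hbdd : BddBelow (Set.range fun F : {F : Submodule ℂ H // Module.finrank ℂ F = n} =>
      ⨆ f : {f : H // f ∈ (F : Submodule ℂ H)ᗮ ∧ ‖f‖ ≤ 1}, ‖M (f : H)‖) := by
    refine ⟨0, ?_⟩
    rintro x ⟨F', rfl⟩
    exact Real.iSup_nonneg fun f => norm_nonneg _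
  refine le_trans (ciInf_le hbdd ⟨F, hF⟩) ?_
  haveI : Nonempty {f : H // f ∈ Fᗮ ∧ ‖f‖ ≤ 1} :=
    ⟨⟨0, Fᗮ.zero_mem, by simp⟩⟩
  refine ciSup_le ?_
  rintro ⟨f, hfmem, hf1⟩
  have hrepr0 : ∀ l : ℕ, ¬ n ≤ l → b.repr f l = 0 := by
    intro l hl
    have hmem : b l ∈ F := Submodule.subset_span ⟨⟨l, lt_of_not_ge hl⟩, rfl⟩
    rw [b.repr_apply_apply]
    exact (Submodule.mem_orthogonal F f).mp hfmem _ hmem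
  have hcoef : ∀ l, ‖b.repr f l‖ ≤ 1 := by
    intro l
    refine (lp.norm_apply_le_norm two_ne_zero (b.repr f) l).trans ?_
    rw [b.repr.norm_map]; exact hf1
  have hle : ∀ l, ‖b.repr f l • M (b l)‖ ≤ (g l : ℝ) := by
    intro l
    rw [norm_smul, hgval l]
    by_cases h : n ≤ l
    · simp only [h, if_true]
      calc ‖b.repr f l‖ * ‖M (b l)‖ ≤ 1 * ‖M (b l)‖ := by
            gcongr; exact hcoef l
        _ = ‖M (b l)‖ := one_mul _
    · simp [hrepr0 l h, h]
  have hnormsum : Summable fun l => ‖b.repr f l • M (b l)‖ :=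
    Summable.of_nonneg_of_le (fun l => norm_nonneg _) hle hgR
  have hMf : HasSum (fun l => b.repr f l • M (b l)) (M f) := by
    have := (b.hasSum_repr f).mapL M
    simpa using this
  calc ‖M f‖ = ‖∑' l, b.repr f l • M (b l)‖ := by rw [hMf.tsum_eq]
    _ ≤ ∑' l, ‖b.repr f l • M (b l)‖ := norm_tsum_le_tsum_norm hnormsum
    _ ≤ ∑' l, (g l : ℝ) := Summable.tsum_le_tsum hle hnormsum hgR
end
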